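/- In the field ℚ(t), for every integer g ≥ 3 and with A = ∏_{i=1}^{3}(1−t^(2g−6+2i))/(1−t^i), B = ∏_{i=1}^{2}(1−t^(2g−4+2i))/(1−t^i), c1 = (1−t)/(1−t^(6g−6)), c2 = (1−t)/(1−t^(2g−3)), c3 = (1−t)/(1−t^(4g−5)), the following identity holds: (t^5−t^2)·A·c1 + t^(2g−2)·B·c3 + t^2(1+t+t^2)·A·c1·c2 + t^(2g−4)(1+t)·B·c2·c3 + t^2(1+t+t^2)·A·c1·c3 + (1+t)(1+t+t^2)·A·c1·c2·c3 = (1−t^(2g−2))(1−t^(2g))/(1−t^(4g−5)) · [ (1−t^(8g−10))/((1−t^(2g−3))(1−t^(6g−6))) + t^2(1−t^(2g−4))(1−t^(6g−8))/((1−t^2)(1−t^(2g−3))(1−t^(6g−6))) + t^(2g−2)/(1−t^2) ]. -/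

import Mathlib

set_option maxHeartbeats 1000000 in
lemma aux_identity {F : Type*} [Field F] (t u : F)
    (h1 : 1 - t ≠ 0) (h2 : 1 - t ^ 2 ≠ 0) (h3 : 1 - t ^ 3 ≠ 0)
    (h5 : 1 - t ^ 3 * u ≠ 0) (h6 : 1 - t ^ 7 * u ^ 2 ≠ 0) (h4 : 1 - t ^ 12 * u ^ 3 ≠ 0) :
    (t ^ 5 - t ^ 2) * ((1 - t ^ 2 * u) / (1 - t) * ((1 - t ^ 4 * u) / (1 - t ^ 2)) * ((1 - t ^ 6 * u) / (1 - t ^ 3))) * ((1 - t) / (1 - t ^ 12 * u ^ 3))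
      + t ^ 4 * u * ((1 - t ^ 4 * u) / (1 - t) * ((1 - t ^ 6 * u) / (1 - t ^ 2))) * ((1 - t) / (1 - t ^ 7 * u ^ 2))
      + t ^ 2 * (1 + t + t ^ 2) * ((1 - t ^ 2 * u) / (1 - t) * ((1 - t ^ 4 * u) / (1 - t ^ 2)) * ((1 - t ^ 6 * u) / (1 - t ^ 3))) * ((1 - t) / (1 - t ^ 12 * u ^ 3)) * ((1 - t) / (1 - t ^ 3 * u))
      + t ^ 2 * u * (1 + t) * ((1 - t ^ 4 * u) / (1 - t) * ((1 - t ^ 6 * u) / (1 - t ^ 2))) * ((1 - t) / (1 - t ^ 3 * u)) * ((1 - t) / (1 - t ^ 7 * u ^ 2))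
      + t ^ 2 * (1 + t + t ^ 2) * ((1 - t ^ 2 * u) / (1 - t) * ((1 - t ^ 4 * u) / (1 - t ^ 2)) * ((1 - t ^ 6 * u) / (1 - t ^ 3))) * ((1 - t) / (1 - t ^ 12 * u ^ 3)) * ((1 - t) / (1 - t ^ 7 * u ^ 2))
      + (1 + t) * (1 + t + t ^ 2) * ((1 - t ^ 2 * u) / (1 - t) * ((1 - t ^ 4 * u) / (1 - t ^ 2)) * ((1 - t ^ 6 * u) / (1 - t ^ 3))) * ((1 - t) / (1 - t ^ 12 * u ^ 3)) * ((1 - t) / (1 - t ^ 3 * u)) * ((1 - t) / (1 - t ^ 7 * u ^ 2))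
    = (1 - t ^ 4 * u) * (1 - t ^ 6 * u) / (1 - t ^ 7 * u ^ 2) * ((1 - t ^ 14 * u ^ 4) / ((1 - t ^ 3 * u) * (1 - t ^ 12 * u ^ 3)) + t ^ 2 * (1 - t ^ 2 * u) * (1 - t ^ 10 * u ^ 3) / ((1 - t ^ 2) * (1 - t ^ 3 * u) * (1 - t ^ 12 * u ^ 3)) + t ^ 4 * u / (1 - t ^ 2)) := by
  have hD : (1 - t) * (1 - t ^ 2) * (1 - t ^ 3) * (1 - t ^ 3 * u) * (1 - t ^ 7 * u ^ 2) *
      (1 - t ^ 12 * u ^ 3) ≠ 0 :=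
    mul_ne_zero (mul_ne_zero (mul_ne_zero (mul_ne_zero (mul_ne_zero h1 h2) h3) h5) h6) h4
  have F1 : (t ^ 5 - t ^ 2) * ((1 - t ^ 2 * u) / (1 - t) * ((1 - t ^ 4 * u) / (1 - t ^ 2)) * ((1 - t ^ 6 * u) / (1 - t ^ 3))) * ((1 - t) / (1 - t ^ 12 * u ^ 3)) = ((t ^ 5 - t ^ 2) * (1 - t ^ 2 * u) * (1 - t ^ 4 * u) * (1 - t ^ 6 * u) * (1 - t)) / ((1 - t) * (1 - t ^ 2) * (1 - t ^ 3) * (1 - t ^ 12 * u ^ 3)) := by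
    simp only [div_mul_div_comm, div_mul_eq_mul_div, div_div, ← mul_div_assoc]
    congr 1 <;> ring
  have E1 : ((t ^ 5 - t ^ 2) * (1 - t ^ 2 * u) * (1 - t ^ 4 * u) * (1 - t ^ 6 * u) * (1 - t)) / ((1 - t) * (1 - t ^ 2) * (1 - t ^ 3) * (1 - t ^ 12 * u ^ 3)) = ((t ^ 5 - t ^ 2) * (1 - t ^ 2 * u) * (1 - t ^ 4 * u) * (1 - t ^ 6 * u) * (1 - t) * ((1 - t ^ 3 * u) * (1 - t ^ 7 * u ^ 2))) / ((1 - t) * (1 - t ^ 2) * (1 - t ^ 3) * (1 - t ^ 3 * u) * (1 - t ^ 7 * u ^ 2) * (1 - t ^ 12 * u ^ 3)) :=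
    (div_eq_div_iff (mul_ne_zero (mul_ne_zero (mul_ne_zero (h1) h2) h3) h4) hD).mpr (by ring)
  have F2 : t ^ 4 * u * ((1 - t ^ 4 * u) / (1 - t) * ((1 - t ^ 6 * u) / (1 - t ^ 2))) * ((1 - t) / (1 - t ^ 7 * u ^ 2)) = (t ^ 4 * u * (1 - t ^ 4 * u) * (1 - t ^ 6 * u) * (1 - t)) / ((1 - t) * (1 - t ^ 2) * (1 - t ^ 7 * u ^ 2)) := by
    simp only [div_mul_div_comm, div_mul_eq_mul_div, div_div, ← mul_div_assoc]
    congr 1 <;> ring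
  have E2 : (t ^ 4 * u * (1 - t ^ 4 * u) * (1 - t ^ 6 * u) * (1 - t)) / ((1 - t) * (1 - t ^ 2) * (1 - t ^ 7 * u ^ 2)) = (t ^ 4 * u * (1 - t ^ 4 * u) * (1 - t ^ 6 * u) * (1 - t) * ((1 - t ^ 3) * (1 - t ^ 3 * u) * (1 - t ^ 12 * u ^ 3))) / ((1 - t) * (1 - t ^ 2) * (1 - t ^ 3) * (1 - t ^ 3 * u) * (1 - t ^ 7 * u ^ 2) * (1 - t ^ 12 * u ^ 3)) :=
    (div_eq_div_iff (mul_ne_zero (mul_ne_zero (h1) h2) h6) hD).mpr (by ring)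
  have F3 : t ^ 2 * (1 + t + t ^ 2) * ((1 - t ^ 2 * u) / (1 - t) * ((1 - t ^ 4 * u) / (1 - t ^ 2)) * ((1 - t ^ 6 * u) / (1 - t ^ 3))) * ((1 - t) / (1 - t ^ 12 * u ^ 3)) * ((1 - t) / (1 - t ^ 3 * u)) = (t ^ 2 * (1 + t + t ^ 2) * (1 - t ^ 2 * u) * (1 - t ^ 4 * u) * (1 - t ^ 6 * u) * (1 - t) * (1 - t)) / ((1 - t) * (1 - t ^ 2) * (1 - t ^ 3) * (1 - t ^ 12 * u ^ 3) * (1 - t ^ 3 * u)) := by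
    simp only [div_mul_div_comm, div_mul_eq_mul_div, div_div, ← mul_div_assoc]
    congr 1 <;> ring
  have E3 : (t ^ 2 * (1 + t + t ^ 2) * (1 - t ^ 2 * u) * (1 - t ^ 4 * u) * (1 - t ^ 6 * u) * (1 - t) * (1 - t)) / ((1 - t) * (1 - t ^ 2) * (1 - t ^ 3) * (1 - t ^ 12 * u ^ 3) * (1 - t ^ 3 * u)) = (t ^ 2 * (1 + t + t ^ 2) * (1 - t ^ 2 * u) * (1 - t ^ 4 * u) * (1 - t ^ 6 * u) * (1 - t) * (1 - t) * (1 - t ^ 7 * u ^ 2)) / ((1 - t) * (1 - t ^ 2) * (1 - t ^ 3) * (1 - t ^ 3 * u) * (1 - t ^ 7 * u ^ 2) * (1 - t ^ 12 * u ^ 3)) :=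
    (div_eq_div_iff (mul_ne_zero (mul_ne_zero (mul_ne_zero (mul_ne_zero (h1) h2) h3) h4) h5) hD).mpr (by ring)
  have F4 : t ^ 2 * u * (1 + t) * ((1 - t ^ 4 * u) / (1 - t) * ((1 - t ^ 6 * u) / (1 - t ^ 2))) * ((1 - t) / (1 - t ^ 3 * u)) * ((1 - t) / (1 - t ^ 7 * u ^ 2)) = (t ^ 2 * u * (1 + t) * (1 - t ^ 4 * u) * (1 - t ^ 6 * u) * (1 - t) * (1 - t)) / ((1 - t) * (1 - t ^ 2) * (1 - t ^ 3 * u) * (1 - t ^ 7 * u ^ 2)) := by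
    simp only [div_mul_div_comm, div_mul_eq_mul_div, div_div, ← mul_div_assoc]
    congr 1 <;> ring
  have E4 : (t ^ 2 * u * (1 + t) * (1 - t ^ 4 * u) * (1 - t ^ 6 * u) * (1 - t) * (1 - t)) / ((1 - t) * (1 - t ^ 2) * (1 - t ^ 3 * u) * (1 - t ^ 7 * u ^ 2)) = (t ^ 2 * u * (1 + t) * (1 - t ^ 4 * u) * (1 - t ^ 6 * u) * (1 - t) * (1 - t) * ((1 - t ^ 3) * (1 - t ^ 12 * u ^ 3))) / ((1 - t) * (1 - t ^ 2) * (1 - t ^ 3) * (1 - t ^ 3 * u) * (1 - t ^ 7 * u ^ 2) * (1 - t ^ 12 * u ^ 3)) :=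
    (div_eq_div_iff (mul_ne_zero (mul_ne_zero (mul_ne_zero (h1) h2) h5) h6) hD).mpr (by ring)
  have F5 : t ^ 2 * (1 + t + t ^ 2) * ((1 - t ^ 2 * u) / (1 - t) * ((1 - t ^ 4 * u) / (1 - t ^ 2)) * ((1 - t ^ 6 * u) / (1 - t ^ 3))) * ((1 - t) / (1 - t ^ 12 * u ^ 3)) * ((1 - t) / (1 - t ^ 7 * u ^ 2)) = (t ^ 2 * (1 + t + t ^ 2) * (1 - t ^ 2 * u) * (1 - t ^ 4 * u) * (1 - t ^ 6 * u) * (1 - t) * (1 - t)) / ((1 - t) * (1 - t ^ 2) * (1 - t ^ 3) * (1 - t ^ 12 * u ^ 3) * (1 - t ^ 7 * u ^ 2)) := by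
    simp only [div_mul_div_comm, div_mul_eq_mul_div, div_div, ← mul_div_assoc]
    congr 1 <;> ring
  have E5 : (t ^ 2 * (1 + t + t ^ 2) * (1 - t ^ 2 * u) * (1 - t ^ 4 * u) * (1 - t ^ 6 * u) * (1 - t) * (1 - t)) / ((1 - t) * (1 - t ^ 2) * (1 - t ^ 3) * (1 - t ^ 12 * u ^ 3) * (1 - t ^ 7 * u ^ 2)) = (t ^ 2 * (1 + t + t ^ 2) * (1 - t ^ 2 * u) * (1 - t ^ 4 * u) * (1 - t ^ 6 * u) * (1 - t) * (1 - t) * (1 - t ^ 3 * u)) / ((1 - t) * (1 - t ^ 2) * (1 - t ^ 3) * (1 - t ^ 3 * u) * (1 - t ^ 7 * u ^ 2) * (1 - t ^ 12 * u ^ 3)) :=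
    (div_eq_div_iff (mul_ne_zero (mul_ne_zero (mul_ne_zero (mul_ne_zero (h1) h2) h3) h4) h6) hD).mpr (by ring)
  have F6 : (1 + t) * (1 + t + t ^ 2) * ((1 - t ^ 2 * u) / (1 - t) * ((1 - t ^ 4 * u) / (1 - t ^ 2)) * ((1 - t ^ 6 * u) / (1 - t ^ 3))) * ((1 - t) / (1 - t ^ 12 * u ^ 3)) * ((1 - t) / (1 - t ^ 3 * u)) * ((1 - t) / (1 - t ^ 7 * u ^ 2)) = ((1 + t) * (1 + t + t ^ 2) * (1 - t ^ 2 * u) * (1 - t ^ 4 * u) * (1 - t ^ 6 * u) * (1 - t) * (1 - t) * (1 - t)) / ((1 - t) * (1 - t ^ 2) * (1 - t ^ 3) * (1 - t ^ 12 * u ^ 3) * (1 - t ^ 3 * u) * (1 - t ^ 7 * u ^ 2)) := by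
    simp only [div_mul_div_comm, div_mul_eq_mul_div, div_div, ← mul_div_assoc]
    congr 1 <;> ring
  have E6 : ((1 + t) * (1 + t + t ^ 2) * (1 - t ^ 2 * u) * (1 - t ^ 4 * u) * (1 - t ^ 6 * u) * (1 - t) * (1 - t) * (1 - t)) / ((1 - t) * (1 - t ^ 2) * (1 - t ^ 3) * (1 - t ^ 12 * u ^ 3) * (1 - t ^ 3 * u) * (1 - t ^ 7 * u ^ 2)) = ((1 + t) * (1 + t + t ^ 2) * (1 - t ^ 2 * u) * (1 - t ^ 4 * u) * (1 - t ^ 6 * u) * (1 - t) * (1 - t) * (1 - t)) / ((1 - t) * (1 - t ^ 2) * (1 - t ^ 3) * (1 - t ^ 3 * u) * (1 - t ^ 7 * u ^ 2) * (1 - t ^ 12 * u ^ 3)) :=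
    (div_eq_div_iff (mul_ne_zero (mul_ne_zero (mul_ne_zero (mul_ne_zero (mul_ne_zero (h1) h2) h3) h4) h5) h6) hD).mpr (by ring)
  have FR : (1 - t ^ 4 * u) * (1 - t ^ 6 * u) / (1 - t ^ 7 * u ^ 2) * ((1 - t ^ 14 * u ^ 4) / ((1 - t ^ 3 * u) * (1 - t ^ 12 * u ^ 3)) + t ^ 2 * (1 - t ^ 2 * u) * (1 - t ^ 10 * u ^ 3) / ((1 - t ^ 2) * (1 - t ^ 3 * u) * (1 - t ^ 12 * u ^ 3)) + t ^ 4 * u / (1 - t ^ 2)) = ((1 - t ^ 4 * u) * (1 - t ^ 6 * u) * ((1 - t ^ 14 * u ^ 4) * (1 - t ^ 2) + t ^ 2 * (1 - t ^ 2 * u) * (1 - t ^ 10 * u ^ 3) + t ^ 4 * u * ((1 - t ^ 3 * u) * (1 - t ^ 12 * u ^ 3))) * ((1 - t) * (1 - t ^ 3))) / ((1 - t) * (1 - t ^ 2) * (1 - t ^ 3) * (1 - t ^ 3 * u) * (1 - t ^ 7 * u ^ 2) * (1 - t ^ 12 * u ^ 3)) := by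
    rw [eq_div_iff hD]
    rw [div_add_div _ _ (mul_ne_zero h5 h4) (mul_ne_zero (mul_ne_zero h2 h5) h4),
      div_add_div _ _ (mul_ne_zero (mul_ne_zero h5 h4) (mul_ne_zero (mul_ne_zero h2 h5) h4)) h2,
      div_mul_div_comm, div_mul_eq_mul_div, div_eq_iff (mul_ne_zero h6 (mul_ne_zero
        (mul_ne_zero (mul_ne_zero h5 h4) (mul_ne_zero (mul_ne_zero h2 h5) h4)) h2))]
    ring
  rw [F1, E1, F2, E2, F3, E3, F4, E4, F5, E5, F6, E6, FR, ← add_div, ← add_div,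
    ← add_div, ← add_div, ← add_div]
  congr 1
  ring

lemma one_sub_X_pow_ne_zero (n : ℕ) (hn : 1 ≤ n) :
    (1 - RatFunc.X ^ n : RatFunc ℚ) ≠ 0 := by
  intro h
  have h1 : (RatFunc.X : RatFunc ℚ) ^ n = 1 := by linear_combination -h
  have h2 : (Polynomial.X : Polynomial ℚ) ^ n = 1 := by
    apply RatFunc.algebraMap_injective ℚ
    simpa [map_pow, RatFunc.algebraMap_X] using h1
  have := congrArg Polynomial.natDegree h2
  simp [Polynomial.natDegree_X_pow] at this
  omega

/-- The simplification of the exceptional-divisor contributions (divided by `2^(2g)`)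
to the stringy E-function of the Higgs moduli space, in `ℚ(t)`, for `g ≥ 3`. -/
theorem stringy_contribution_identity (g : ℕ) (hg : 3 ≤ g) :
    let t : RatFunc ℚ := RatFunc.X
    let A : RatFunc ℚ := ∏ i ∈ Finset.Icc 1 3, (1 - t ^ (2 * g - 6 + 2 * i)) / (1 - t ^ i)
    let B : RatFunc ℚ := ∏ i ∈ Finset.Icc 1 2, (1 - t ^ (2 * g - 4 + 2 * i)) / (1 - t ^ i)
    let c1 : RatFunc ℚ := (1 - t) / (1 - t ^ (6 * g - 6))
    let c2 : RatFunc ℚ := (1 - t) / (1 - t ^ (2 * g - 3))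
    let c3 : RatFunc ℚ := (1 - t) / (1 - t ^ (4 * g - 5))
    (t ^ 5 - t ^ 2) * A * c1 + t ^ (2 * g - 2) * B * c3
        + t ^ 2 * (1 + t + t ^ 2) * A * c1 * c2
        + t ^ (2 * g - 4) * (1 + t) * B * c2 * c3
        + t ^ 2 * (1 + t + t ^ 2) * A * c1 * c3
        + (1 + t) * (1 + t + t ^ 2) * A * c1 * c2 * c3
      = (1 - t ^ (2 * g - 2)) * (1 - t ^ (2 * g)) / (1 - t ^ (4 * g - 5)) *
          ((1 - t ^ (8 * g - 10)) / ((1 - t ^ (2 * g - 3)) * (1 - t ^ (6 * g - 6)))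
            + t ^ 2 * (1 - t ^ (2 * g - 4)) * (1 - t ^ (6 * g - 8)) /
                ((1 - t ^ 2) * (1 - t ^ (2 * g - 3)) * (1 - t ^ (6 * g - 6)))
            + t ^ (2 * g - 2) / (1 - t ^ 2)) := by
  intro t A B c1 c2 c3
  obtain ⟨k, rfl⟩ : ∃ k, g = k + 3 := ⟨g - 3, by omega⟩
  have hA : A = ((1 - t ^ (2 * k + 2)) / (1 - t ^ 1)) * ((1 - t ^ (2 * k + 4)) / (1 - t ^ 2))
      * ((1 - t ^ (2 * k + 6)) / (1 - t ^ 3)) := by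
    show (∏ i ∈ Finset.Icc 1 3, _) = _
    rw [show Finset.Icc 1 3 = {1, 2, 3} from rfl]
    rw [Finset.prod_insert (by decide), Finset.prod_insert (by decide), Finset.prod_singleton,
      show 2 * (k + 3) - 6 + 2 * 1 = 2 * k + 2 from by omega,
      show 2 * (k + 3) - 6 + 2 * 2 = 2 * k + 4 from by omega,
      show 2 * (k + 3) - 6 + 2 * 3 = 2 * k + 6 from by omega, mul_assoc]
  have hB : B = ((1 - t ^ (2 * k + 4)) / (1 - t ^ 1)) * ((1 - t ^ (2 * k + 6)) / (1 - t ^ 2)) := by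
    show (∏ i ∈ Finset.Icc 1 2, _) = _
    rw [show Finset.Icc 1 2 = {1, 2} from rfl]
    rw [Finset.prod_insert (by decide), Finset.prod_singleton,
      show 2 * (k + 3) - 4 + 2 * 1 = 2 * k + 4 from by omega,
      show 2 * (k + 3) - 4 + 2 * 2 = 2 * k + 6 from by omega]
  have e1 : 6 * (k + 3) - 6 = 6 * k + 12 := by omega
  have e2 : 2 * (k + 3) - 3 = 2 * k + 3 := by omega
  have e3 : 4 * (k + 3) - 5 = 4 * k + 7 := by omega
  have e4 : 2 * (k + 3) - 2 = 2 * k + 4 := by omega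
  have e5 : 2 * (k + 3) - 4 = 2 * k + 2 := by omega
  have e6 : 2 * (k + 3) = 2 * k + 6 := by omega
  have e7 : 8 * (k + 3) - 10 = 8 * k + 14 := by omega
  have e8 : 6 * (k + 3) - 8 = 6 * k + 10 := by omega
  have f4 : 2 * k + 6 - 2 = 2 * k + 4 := by omega
  have f5 : 2 * k + 6 - 4 = 2 * k + 2 := by omega
  have f2 : 2 * k + 6 - 3 = 2 * k + 3 := by omega
  simp only [hA, hB, c1, c2, c3, e1, e2, e3, e4, e5, e6, e7, e8, f4, f5, f2]
  have q1 : t ^ (2 * k + 2) = t ^ 2 * t ^ (2 * k) := by ring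
  have q2 : t ^ (2 * k + 3) = t ^ 3 * t ^ (2 * k) := by ring
  have q3 : t ^ (2 * k + 4) = t ^ 4 * t ^ (2 * k) := by ring
  have q4 : t ^ (2 * k + 6) = t ^ 6 * t ^ (2 * k) := by ring
  have q5 : t ^ (4 * k + 7) = t ^ 7 * (t ^ (2 * k)) ^ 2 := by ring
  have q6 : t ^ (6 * k + 12) = t ^ 12 * (t ^ (2 * k)) ^ 3 := by ring
  have q7 : t ^ (6 * k + 10) = t ^ 10 * (t ^ (2 * k)) ^ 3 := by ring
  have q8 : t ^ (8 * k + 14) = t ^ 14 * (t ^ (2 * k)) ^ 4 := by ring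
  have n1 : (1 - t ≠ 0) := by simpa using one_sub_X_pow_ne_zero 1 le_rfl
  have n2 : (1 - t ^ 2 ≠ 0) := one_sub_X_pow_ne_zero 2 (by omega)
  have n3 : (1 - t ^ 3 ≠ 0) := one_sub_X_pow_ne_zero 3 (by omega)
  have n5 : (1 - t ^ 3 * t ^ (2 * k) ≠ 0) := by
    rw [← q2]; exact one_sub_X_pow_ne_zero (2 * k + 3) (by omega)
  have n6 : (1 - t ^ 7 * (t ^ (2 * k)) ^ 2 ≠ 0) := by
    rw [← q5]; exact one_sub_X_pow_ne_zero (4 * k + 7) (by omega)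
  have n4 : (1 - t ^ 12 * (t ^ (2 * k)) ^ 3 ≠ 0) := by
    rw [← q6]; exact one_sub_X_pow_ne_zero (6 * k + 12) (by omega)
  simp only [pow_one, q1, q2, q3, q4, q5, q6, q7, q8]
  exact aux_identity t (t ^ (2 * k)) n1 n2 n3 n5 n6 n4
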